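/- Let 0<q<1, w∈ℂ∖{0}, u := |w|q/(1−q²), H(t) := 4·Σ_{n=1}^∞ n·e^{−t|w|[n]_q} and H_S(t) := 4·Σ_{n=1}^∞ n·e^{−t·u·q^{−n}}. Then for every t>0 one has H(t) − H_S(t) > 0, and H(t) − H_S(t) = O(t·log²t) as t→0⁺; i.e. there exist C>0 and t₀∈(0,1) such that 0 < H(t) − H_S(t) ≤ C·t·(log t)² for all t∈(0,t₀). In particular lim_{t→0⁺} (H(t) − H_S(t)) = 0. -/

import Mathlib

open Complex Real Filter

/-- The q-number `[n]_q = (q^{-n} - q^n)/(q^{-1} - q)`. -/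
noncomputable def qnum (q : ℝ) (n : ℕ) : ℝ :=
  (q ^ (-(n : ℤ)) - q ^ (n : ℤ)) / (q ^ (-1 : ℤ) - q)

/-- The heat trace `H(t) = 4 Σ_{n≥1} n e^{-t|w|[n]_q}` of the full Dirac operator. -/
noncomputable def heatTrace (q : ℝ) (w : ℂ) (t : ℝ) : ℝ :=
  4 * ∑' n : ℕ, ((n : ℝ) + 1) * Real.exp (-(t * (‖w‖ * qnum q (n + 1))))

/-- The heat trace `H_S(t) = 4 Σ_{n≥1} n e^{-t u q^{-n}}` of the simplified Dirac
operator, with `u = |w|q/(1-q²)`. -/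
noncomputable def heatTraceS (q : ℝ) (w : ℂ) (t : ℝ) : ℝ :=
  4 * ∑' n : ℕ, ((n : ℝ) + 1) *
    Real.exp (-(t * (‖w‖ * q / (1 - q ^ 2) * q ^ (-((n : ℤ) + 1)))))

/-- Auxiliary: term of the full heat trace, rewritten. -/
noncomputable def auxF (q u t : ℝ) (n : ℕ) : ℝ :=
  ((n : ℝ) + 1) * Real.exp (-(t * (u * (q ^ (n + 1))⁻¹ - u * q ^ (n + 1))))

/-- Auxiliary: term of the simplified heat trace, rewritten. -/
noncomputable def auxG (q u t : ℝ) (n : ℕ) : ℝ :=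
  ((n : ℝ) + 1) * Real.exp (-(t * (u * (q ^ (n + 1))⁻¹)))

lemma aux_summable {r : ℝ} (h0 : 0 ≤ r) (h1 : r < 1) :
    Summable (fun n : ℕ => ((n : ℝ) + 1) * r ^ (n + 1)) := by
  have h1' : ‖r‖ < 1 := by rwa [Real.norm_eq_abs, _root_.abs_of_nonneg h0]
  have hs : Summable (fun n : ℕ => (n : ℝ) ^ 1 * r ^ n) :=
    summable_pow_mul_geometric_of_norm_lt_one 1 h1'
  have hs' : Summable (fun n : ℕ => (n : ℝ) * r ^ n) := by
    refine hs.congr fun n => by ring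
  have hg : Summable (fun n : ℕ => r ^ n) := summable_geometric_of_lt_one h0 h1
  refine ((hs'.add hg).mul_left r).congr fun n => ?_
  ring

lemma aux_exp_sub_one_le {x : ℝ} (hx : 0 ≤ x) :
    Real.exp x - 1 ≤ x * Real.exp x := by
  have h1 : 1 - x ≤ Real.exp (-x) := by linarith [Real.add_one_le_exp (-x)]
  have h2 : (1 - x) * Real.exp x ≤ Real.exp (-x) * Real.exp x :=
    mul_le_mul_of_nonneg_right h1 (Real.exp_pos x).le
  rw [← Real.exp_add] at h2
  simp at h2
  nlinarith [Real.exp_pos x]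

lemma auxG_summable {q u t : ℝ} (hq : 0 < q) (hq1 : q < 1) (hu : 0 < u) (ht : 0 < t) :
    Summable (auxG q u t) := by
  set L : ℝ := -Real.log q with hL_def
  have hL : 0 < L := by
    have : Real.log q < 0 := Real.log_neg hq hq1
    simp [hL_def]; linarith
  set r : ℝ := Real.exp (-(t * u * L)) with hr_def
  have hr0 : 0 ≤ r := (Real.exp_pos _).le
  have hr1 : r < 1 := by
    rw [hr_def, Real.exp_lt_one_iff]
    nlinarith [mul_pos (mul_pos ht hu) hL]
  refine Summable.of_nonneg_of_le (fun n => ?_) (fun n => ?_) (aux_summable hr0 hr1)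
  · exact mul_nonneg (by positivity) (Real.exp_pos _).le
  · have hqinv : (q ^ (n + 1))⁻¹ = Real.exp (((n : ℝ) + 1) * L) := by
      rw [← Real.exp_log (pow_pos hq (n + 1)), ← Real.exp_neg, Real.log_pow]
      push_cast
      rw [hL_def]
      ring_nf
    have hge : ((n : ℝ) + 1) * L ≤ (q ^ (n + 1))⁻¹ := by
      rw [hqinv]
      linarith [Real.add_one_le_exp (((n : ℝ) + 1) * L)]
    have hexp : Real.exp (-(t * (u * (q ^ (n + 1))⁻¹))) ≤ r ^ (n + 1) := by
      have : r ^ (n + 1) = Real.exp (((n : ℕ) + 1 : ℕ) * (-(t * u * L))) := by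
        rw [Real.exp_nat_mul]
      rw [this, Real.exp_le_exp]
      push_cast
      nlinarith [mul_le_mul_of_nonneg_left hge (mul_pos ht hu).le]
    calc auxG q u t n ≤ ((n : ℝ) + 1) * r ^ (n + 1) := by
          exact mul_le_mul_of_nonneg_left hexp (by positivity)
      _ = _ := rfl

lemma auxF_eq {q u t : ℝ} :
    ∀ n, auxF q u t n = auxG q u t n * Real.exp (t * (u * q ^ (n + 1))) := by
  intro n
  unfold auxF auxG
  rw [mul_assoc, ← Real.exp_add]
  ring_nf

lemma auxF_summable {q u t : ℝ} (hq : 0 < q) (hq1 : q < 1) (hu : 0 < u) (ht : 0 < t) :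
    Summable (auxF q u t) := by
  have hG := auxG_summable hq hq1 hu ht
  refine Summable.of_nonneg_of_le (fun n => ?_) (fun n => ?_)
    ((hG.mul_right (Real.exp (t * (u * q)))))
  · exact mul_nonneg (by positivity) (Real.exp_pos _).le
  · rw [auxF_eq n]
    refine mul_le_mul_of_nonneg_left ?_ ?_
    · rw [Real.exp_le_exp]
      have : q ^ (n + 1) ≤ q := by
        calc q ^ (n + 1) ≤ q ^ 1 := pow_le_pow_of_le_one hq.le hq1.le (by omega)
          _ = q := pow_one q
      nlinarith [mul_le_mul_of_nonneg_left this (mul_pos ht hu).le]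
    · exact mul_nonneg (by positivity) (Real.exp_pos _).le

lemma auxG_lt_auxF {q u t : ℝ} (hq : 0 < q) (hu : 0 < u) (ht : 0 < t) (n : ℕ) :
    auxG q u t n < auxF q u t n := by
  unfold auxF auxG
  have hp : 0 < q ^ (n + 1) := pow_pos hq _
  refine mul_lt_mul_of_pos_left ?_ (by positivity)
  rw [Real.exp_lt_exp]
  have : 0 < u * q ^ (n + 1) := by positivity
  nlinarith

lemma auxFG_bound {q u t : ℝ} (hq : 0 < q) (hq1 : q < 1) (hu : 0 < u)
    (ht : 0 < t) (ht1 : t ≤ 1) (n : ℕ) :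
    auxF q u t n - auxG q u t n ≤
      t * u * Real.exp (u * q) * (((n : ℝ) + 1) * q ^ (n + 1)) := by
  have hp : 0 < q ^ (n + 1) := pow_pos hq _
  rw [auxF_eq n]
  set B : ℝ := u * q ^ (n + 1) with hB_def
  have hB : 0 < B := by rw [hB_def]; positivity
  have hBq : B ≤ u * q := by
    have h : q ^ (n + 1) ≤ q := by
      calc q ^ (n + 1) ≤ q ^ 1 := pow_le_pow_of_le_one hq.le hq1.le (by omega)
        _ = q := pow_one q
    rw [hB_def]; nlinarith
  have htB : t * B ≤ u * q := by nlinarith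
  have hexp1 : Real.exp (t * B) - 1 ≤ t * B * Real.exp (t * B) :=
    aux_exp_sub_one_le (by positivity)
  have hexp2 : Real.exp (t * B) ≤ Real.exp (u * q) := by
    rw [Real.exp_le_exp]; exact htB
  have hG1 : auxG q u t n ≤ ((n : ℝ) + 1) := by
    unfold auxG
    have h1 : Real.exp (-(t * (u * (q ^ (n + 1))⁻¹))) ≤ 1 := by
      rw [Real.exp_le_one_iff]
      have : 0 < u * (q ^ (n + 1))⁻¹ := by positivity
      nlinarith
    nlinarith
  have hG0 : 0 ≤ auxG q u t n := mul_nonneg (by positivity) (Real.exp_pos _).le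
  have key : auxG q u t n * Real.exp (t * B) - auxG q u t n ≤
      ((n : ℝ) + 1) * (t * B * Real.exp (u * q)) := by
    have h1 : auxG q u t n * (Real.exp (t * B) - 1) ≤
        ((n : ℝ) + 1) * (Real.exp (t * B) - 1) := by
      have h0 : 0 ≤ Real.exp (t * B) - 1 := by
        have := Real.add_one_le_exp (t * B)
        nlinarith
      exact mul_le_mul_of_nonneg_right hG1 h0
    have h2 : t * B * Real.exp (t * B) ≤ t * B * Real.exp (u * q) :=
      mul_le_mul_of_nonneg_left hexp2 (by positivity)
    nlinarith
  have heq : ((n : ℝ) + 1) * (t * B * Real.exp (u * q)) =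
      t * u * Real.exp (u * q) * (((n : ℝ) + 1) * q ^ (n + 1)) := by
    rw [hB_def]; ring
  linarith [key, heq.le]

/-- `H(t) − H_S(t) > 0` for all `t > 0`, `H − H_S = O(t log²t)` as
`t → 0⁺`, and in particular `H(t) − H_S(t) → 0` as `t → 0⁺`. -/
theorem heatTrace_simplified_difference (q : ℝ) (hq : 0 < q) (hq1 : q < 1)
    (w : ℂ) (hw : w ≠ 0) :
    (∀ t : ℝ, 0 < t → 0 < heatTrace q w t - heatTraceS q w t) ∧
    (∃ C : ℝ, 0 < C ∧ ∃ t₀ ∈ Set.Ioo (0 : ℝ) 1, ∀ t ∈ Set.Ioo (0 : ℝ) t₀,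
      heatTrace q w t - heatTraceS q w t ≤ C * t * (Real.log t) ^ 2) ∧
    Filter.Tendsto (fun t : ℝ => heatTrace q w t - heatTraceS q w t)
      (nhdsWithin 0 (Set.Ioi 0)) (nhds 0) := by
  have hqne : q ≠ 0 := ne_of_gt hq
  have h1q2 : (0:ℝ) < 1 - q ^ 2 := by nlinarith
  have hw0 : 0 < ‖w‖ := norm_pos_iff.mpr hw
  set u : ℝ := ‖w‖ * q / (1 - q ^ 2) with hu_def
  have hu : 0 < u := div_pos (mul_pos hw0 hq) h1q2
  have hp : ∀ n : ℕ, (0:ℝ) < q ^ (n + 1) := fun n => pow_pos hq _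
  -- rewrite the two heat traces in terms of auxF and auxG
  have hkey : ∀ n : ℕ, ‖w‖ * qnum q (n + 1) =
      u * (q ^ (n + 1))⁻¹ - u * q ^ (n + 1) := by
    intro n
    rw [hu_def]
    unfold qnum
    simp only [zpow_neg, zpow_natCast, zpow_one]
    have he : q⁻¹ - q = (1 - q ^ 2) / q := by field_simp
    rw [he, div_div_eq_mul_div]
    field_simp
  have hH : ∀ t, heatTrace q w t = 4 * ∑' n, auxF q u t n := by
    intro t
    unfold heatTrace
    congr 1
    refine tsum_congr fun n => ?_
    rw [hkey n]
    rfl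
  have hS : ∀ t, heatTraceS q w t = 4 * ∑' n, auxG q u t n := by
    intro t
    unfold heatTraceS
    congr 1
  -- positivity
  have hpos : ∀ t : ℝ, 0 < t → 0 < heatTrace q w t - heatTraceS q w t := by
    intro t ht
    rw [hH t, hS t, ← mul_sub,
      ← Summable.tsum_sub (auxF_summable hq hq1 hu ht) (auxG_summable hq hq1 hu ht)]
    have : 0 < ∑' n, (auxF q u t n - auxG q u t n) := by
      refine Summable.tsum_pos ((auxF_summable hq hq1 hu ht).sub (auxG_summable hq hq1 hu ht))
        (fun n => sub_nonneg.2 (auxG_lt_auxF hq hu ht n).le) 0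
        (sub_pos.2 (auxG_lt_auxF hq hu ht 0))
    linarith
  -- the O(t) bound on (0, e⁻¹)
  set K : ℝ := ∑' n : ℕ, ((n : ℝ) + 1) * q ^ (n + 1) with hK_def
  have hK_sum : Summable (fun n : ℕ => ((n : ℝ) + 1) * q ^ (n + 1)) :=
    aux_summable hq.le hq1
  have hK0 : 0 ≤ K :=
    tsum_nonneg fun n => mul_nonneg (by positivity) (pow_nonneg hq.le _)
  set C₀ : ℝ := 4 * (u * Real.exp (u * q) * K) with hC0_def
  have hC00 : 0 ≤ C₀ := by positivity
  have hbound : ∀ t : ℝ, 0 < t → t ≤ 1 →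
      heatTrace q w t - heatTraceS q w t ≤ C₀ * t := by
    intro t ht ht1
    rw [hH t, hS t, ← mul_sub,
      ← Summable.tsum_sub (auxF_summable hq hq1 hu ht) (auxG_summable hq hq1 hu ht)]
    have hle : ∑' n, (auxF q u t n - auxG q u t n) ≤
        ∑' n : ℕ, (t * u * Real.exp (u * q)) * (((n : ℝ) + 1) * q ^ (n + 1)) := by
      refine Summable.tsum_le_tsum (fun n => ?_)
        ((auxF_summable hq hq1 hu ht).sub (auxG_summable hq hq1 hu ht))
        (hK_sum.mul_left _)
      have := auxFG_bound hq hq1 hu ht ht1 n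
      linarith
    rw [tsum_mul_left, ← hK_def] at hle
    rw [hC0_def]
    nlinarith
  -- the O(t log² t) statement
  have hpart2 : ∃ C : ℝ, 0 < C ∧ ∃ t₀ ∈ Set.Ioo (0 : ℝ) 1, ∀ t ∈ Set.Ioo (0 : ℝ) t₀,
      heatTrace q w t - heatTraceS q w t ≤ C * t * (Real.log t) ^ 2 := by
    refine ⟨C₀ + 1, by linarith, Real.exp (-1), ⟨Real.exp_pos _, by
      rw [Real.exp_lt_one_iff]; norm_num⟩, fun t ht => ?_⟩
    obtain ⟨ht0, htt⟩ := ht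
    have ht1 : t < 1 := lt_trans htt (by rw [Real.exp_lt_one_iff]; norm_num)
    have hlog : Real.log t < -1 := by
      have := Real.log_lt_log ht0 htt
      rwa [Real.log_exp] at this
    have hlog2 : 1 ≤ (Real.log t) ^ 2 := by nlinarith
    have h1 := hbound t ht0 ht1.le
    have h2 : C₀ * t ≤ (C₀ + 1) * t * (Real.log t) ^ 2 := by
      nlinarith [mul_le_mul_of_nonneg_left hlog2
        (mul_nonneg (by linarith : (0:ℝ) ≤ C₀ + 1) ht0.le)]
    linarith
  refine ⟨hpos, hpart2, ?_⟩
  -- the limit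
  have hub : ∀ᶠ t in nhdsWithin (0:ℝ) (Set.Ioi 0),
      heatTrace q w t - heatTraceS q w t ≤ C₀ * t := by
    filter_upwards [Ioo_mem_nhdsGT_of_mem (show (0:ℝ) ∈ Set.Ico (0:ℝ) 1 by
      constructor <;> norm_num)] with t ht
    exact hbound t ht.1 ht.2.le
  have hlb : ∀ᶠ t in nhdsWithin (0:ℝ) (Set.Ioi 0),
      (0:ℝ) ≤ heatTrace q w t - heatTraceS q w t := by
    filter_upwards [self_mem_nhdsWithin] with t ht
    exact (hpos t ht).le
  have htend : Tendsto (fun t : ℝ => C₀ * t) (nhdsWithin (0:ℝ) (Set.Ioi 0)) (nhds 0) := by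
    have : Tendsto (fun t : ℝ => C₀ * t) (nhds (0:ℝ)) (nhds (C₀ * 0)) :=
      (continuous_const.mul continuous_id).tendsto 0
    rw [mul_zero] at this
    exact this.mono_left nhdsWithin_le_nhds
  exact tendsto_of_tendsto_of_tendsto_of_le_of_le' tendsto_const_nhds htend hlb hub
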